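/- Let C, P, Q, a, b be as in the context. For all objects F and G of C, post-composition with ρ_G ∘ (id_G ⊗ a) : G ⊗ P → G ⊗ 𝟙 → G induces a bijection Hom_C(F ⊗ P, G ⊗ P) ≅ Hom_C(F ⊗ P, G). (Abstract form of Lemma 2.8(2): Hom(F ⋆ P_U, G ⋆ P_U) ≅ Hom(F ⋆ P_U, G).) -/

import Mathlib

/-!
Abstract form of Lemma 2.8(2): with `P ⟶ 𝟙 ⟶ Q ⟶ P⟦1⟧` distinguished, `P ⊗ Q ≅ 0`,
`Q ⊗ P ≅ 0`, for all objects `F`, `G`, post-composition with the morphism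
`G ⊗ P ⟶ G ⊗ 𝟙 ⟶ G` induces a bijection `Hom(F ⊗ P, G ⊗ P) ≅ Hom(F ⊗ P, G)`.
-/

open CategoryTheory Category Limits Pretriangulated MonoidalCategory

set_option linter.unusedSectionVars false

section Aux

variable {C : Type*} [Category C] [MonoidalCategory C]
    [Preadditive C] [HasZeroObject C] [HasShift C ℤ]
    [∀ n : ℤ, (shiftFunctor C n).Additive] [Pretriangulated C]
    [∀ X : C, (tensorLeft X).CommShift ℤ] [∀ X : C, (tensorRight X).CommShift ℤ]
    [∀ X : C, (tensorLeft X).IsTriangulated] [∀ X : C, (tensorRight X).IsTriangulated]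
    (P Q : C) (a : P ⟶ 𝟙_ C) (b : 𝟙_ C ⟶ Q) (δ : Q ⟶ P⟦(1 : ℤ)⟧)
    (hT : Triangle.mk a b δ ∈ distTriang C)
    (hPQ : IsZero (P ⊗ Q)) (hQP : IsZero (Q ⊗ P))

omit [∀ (X : C), (tensorRight X).IsTriangulated] in
include hT in
/-- `X ◁ a : X ⊗ P ⟶ X ⊗ 𝟙` is an isomorphism for every `X`. -/
lemma aux_isIso_whisker (X : C) (hX : IsZero (X ⊗ Q)) : IsIso (X ◁ a) := by
  have h := (tensorLeft X).map_distinguished _ hT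
  exact (Triangle.isZero₃_iff_isIso₁ _ h).1 hX

include hT hPQ hQP in
/-- Every morphism `A ⊗ P ⟶ B ⊗ Q` is zero. -/
lemma aux_hom_zero (A B : C) (f : A ⊗ P ⟶ B ⊗ Q) : f = 0 := by
  have hz : IsZero ((B ⊗ Q) ⊗ P) :=
    ((Functor.map_isZero (tensorLeft B) hQP).of_iso (α_ B Q P)).of_iso (Iso.refl _)
  have h1 : f ▷ P = 0 := hz.eq_of_tgt _ _
  have h2 : (A ⊗ P) ◁ a ≫ f ▷ 𝟙_ C = 0 := by
    rw [whisker_exchange, h1, zero_comp]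
  have := aux_isIso_whisker P Q a b δ hT (A ⊗ P)
    ((Functor.map_isZero (tensorLeft A) hPQ).of_iso (α_ A P Q))
  have h3 : f ▷ 𝟙_ C = 0 := by
    rw [← cancel_epi ((A ⊗ P) ◁ a), h2, comp_zero]
  calc f = (ρ_ (A ⊗ P)).inv ≫ f ▷ 𝟙_ C ≫ (ρ_ (B ⊗ Q)).hom := by
            rw [MonoidalCategory.rightUnitor_naturality, Iso.inv_hom_id_assoc]
    _ = 0 := by rw [h3, zero_comp, comp_zero]

end Aux

theorem microlocal_kernel_hom_bijection
    {C : Type*} [Category C] [MonoidalCategory C]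
    [Preadditive C] [HasZeroObject C] [HasShift C ℤ]
    [∀ n : ℤ, (shiftFunctor C n).Additive] [Pretriangulated C]
    [∀ X : C, (tensorLeft X).CommShift ℤ] [∀ X : C, (tensorRight X).CommShift ℤ]
    [∀ X : C, (tensorLeft X).IsTriangulated] [∀ X : C, (tensorRight X).IsTriangulated]
    (P Q : C) (a : P ⟶ 𝟙_ C) (b : 𝟙_ C ⟶ Q) (δ : Q ⟶ P⟦(1 : ℤ)⟧)
    (hT : Triangle.mk a b δ ∈ distTriang C)
    (hPQ : IsZero (P ⊗ Q)) (hQP : IsZero (Q ⊗ P)) :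
    ∀ F G : C,
      Function.Bijective (fun f : F ⊗ P ⟶ G ⊗ P => f ≫ ((G ◁ a) ≫ (ρ_ G).hom)) := by
  intro F G
  set T' := (tensorLeft G).mapTriangle.obj (Triangle.mk a b δ) with hT'def
  have hT' : T' ∈ distTriang C := (tensorLeft G).map_distinguished _ hT
  constructor
  · -- injectivity
    intro f₁ f₂ h
    dsimp at h
    rw [← sub_eq_zero]
    set f := f₁ - f₂ with hf
    have hf0 : f ≫ G ◁ a = 0 := by
      have : f ≫ (G ◁ a ≫ (ρ_ G).hom) = 0 := by
        rw [hf, Preadditive.sub_comp, h, sub_self]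
      rw [← cancel_mono (ρ_ G).hom, assoc, this, zero_comp]
    -- f : F ⊗ P ⟶ T'.obj₁ with f ≫ T'.mor₁ = 0
    obtain ⟨g, hg⟩ := Triangle.coyoneda_exact₂ _ (inv_rot_of_distTriang _ hT') f
      (by exact hf0)
    -- g : F ⊗ P ⟶ (G ⊗ Q)⟦(-1 : ℤ)⟧, show g = 0
    have hg0 : g = 0 := by
      have hfaith : Function.Injective (fun h : (F ⊗ P) ⟶ (G ⊗ Q)⟦(-1 : ℤ)⟧ =>
          h⟦(1 : ℤ)⟧') := fun x y hxy => (shiftFunctor C (1 : ℤ)).map_injective hxy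
      apply hfaith
      dsimp
      refine Eq.trans ?_ (Functor.map_zero _ _ _).symm
      -- (F ⊗ P)⟦1⟧ ≅ F⟦1⟧ ⊗ P, and (G ⊗ Q)⟦-1⟧⟦1⟧ ≅ G ⊗ Q
      set e₁ := ((tensorRight P).commShiftIso (1 : ℤ)).app F
      set e₂ := (shiftFunctorCompIsoId C (-1 : ℤ) (1 : ℤ) (by omega)).app (G ⊗ Q)
      have key : e₁.hom ≫ g⟦(1 : ℤ)⟧' ≫ e₂.hom = 0 :=
        aux_hom_zero P Q a b δ hT hPQ hQP _ _ _
      have : g⟦(1 : ℤ)⟧' ≫ e₂.hom = 0 := by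
        rw [← cancel_epi e₁.hom, key, comp_zero]
      exact (cancel_mono e₂.hom).1 (this.trans zero_comp.symm)
    rw [hg, hg0, zero_comp]
    rfl
  · -- surjectivity
    intro g
    have hb : (g ≫ (ρ_ G).inv) ≫ G ◁ b = 0 :=
      aux_hom_zero P Q a b δ hT hPQ hQP _ _ _
    obtain ⟨f, hf⟩ := Triangle.coyoneda_exact₂ _ hT' (g ≫ (ρ_ G).inv) (by
      exact hb)
    refine ⟨f, ?_⟩
    dsimp [T'] at hf ⊢
    have := hf =≫ (ρ_ G).hom
    have h2 : (g ≫ (ρ_ G).inv) ≫ (ρ_ G).hom = g := by rw [assoc, Iso.inv_hom_id, comp_id]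
    exact ((h2.symm.trans this).trans (assoc _ _ _)).symm
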